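/- For the hypersequent calculus HLJ extended with the communication rule (com): from Γ, Δ ⇒ Θ | G and Γ', Δ' ⇒ Θ' | G infer Γ, Δ' ⇒ Θ | Γ', Δ ⇒ Θ' | G, the hypersequent ⇒ (φ → ψ) ∨ (ψ → φ) is derivable for all formulas φ, ψ. -/
import Mathlib


/-- Propositional formulas over countably many atoms with `∧`, `∨`, `→`, `⊥`. -/
inductive PForm : Type
  | atom : ℕ → PForm
  | bot : PForm
  | imp : PForm → PForm → PForm
  | and : PForm → PForm → PForm
  | or : PForm → PForm → PForm

/-- A single-conclusion sequent `Γ ⇒ φ`: a finite list of formulas together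
with one succedent formula. -/
abbrev Sequent : Type := List PForm × PForm

/-- A hypersequent: a finite list of single-conclusion sequents. -/
abbrev Hypersequent : Type := List Sequent

/-- The hypersequent calculus HLJ + (com): HLJ extended with Avron's
communication rule. -/
inductive HLJCom : Hypersequent → Prop
  | id (φ : PForm) : HLJCom [([φ], φ)]
  | bot (φ : PForm) : HLJCom [([PForm.bot], φ)]
  | ew (S : Sequent) {G} : HLJCom G → HLJCom (S :: G)
  | ec {S : Sequent} {G} : HLJCom (S :: S :: G) → HLJCom (S :: G)
  | ee {S T : Sequent} (G : Hypersequent) {H} :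
      HLJCom (G ++ S :: T :: H) → HLJCom (G ++ T :: S :: H)
  | iwL (φ : PForm) {Γ δ G} : HLJCom ((Γ, δ) :: G) → HLJCom ((φ :: Γ, δ) :: G)
  | icL {φ : PForm} {Γ δ G} :
      HLJCom ((φ :: φ :: Γ, δ) :: G) → HLJCom ((φ :: Γ, δ) :: G)
  | ieL {φ ψ : PForm} (Γ₁ : List PForm) {Γ₂ δ G} :
      HLJCom ((Γ₁ ++ φ :: ψ :: Γ₂, δ) :: G) →
      HLJCom ((Γ₁ ++ ψ :: φ :: Γ₂, δ) :: G)
  | cut {Γ₀ Γ₁ : List PForm} {δ χ : PForm} {G} :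
      HLJCom ((Γ₀, δ) :: G) → HLJCom ((δ :: Γ₁, χ) :: G) →
      HLJCom ((Γ₀ ++ Γ₁, χ) :: G)
  | andL₁ {φ₁ : PForm} (φ₂ : PForm) {Γ δ G} :
      HLJCom ((φ₁ :: Γ, δ) :: G) → HLJCom ((PForm.and φ₁ φ₂ :: Γ, δ) :: G)
  | andL₂ (φ₁ : PForm) {φ₂ : PForm} {Γ δ G} :
      HLJCom ((φ₂ :: Γ, δ) :: G) → HLJCom ((PForm.and φ₁ φ₂ :: Γ, δ) :: G)
  | andR {Γ} {φ ψ : PForm} {G} :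
      HLJCom ((Γ, φ) :: G) → HLJCom ((Γ, ψ) :: G) →
      HLJCom ((Γ, PForm.and φ ψ) :: G)
  | orL {φ ψ : PForm} {Γ δ G} :
      HLJCom ((φ :: Γ, δ) :: G) → HLJCom ((ψ :: Γ, δ) :: G) →
      HLJCom ((PForm.or φ ψ :: Γ, δ) :: G)
  | orR₁ {Γ} {φ : PForm} (ψ : PForm) {G} :
      HLJCom ((Γ, φ) :: G) → HLJCom ((Γ, PForm.or φ ψ) :: G)
  | orR₂ (φ : PForm) {ψ : PForm} {Γ G} :
      HLJCom ((Γ, ψ) :: G) → HLJCom ((Γ, PForm.or φ ψ) :: G)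
  | impL {φ ψ : PForm} {Γ δ G} :
      HLJCom ((Γ, φ) :: G) → HLJCom ((ψ :: Γ, δ) :: G) →
      HLJCom ((PForm.imp φ ψ :: Γ, δ) :: G)
  | impR {φ ψ : PForm} {Γ G} :
      HLJCom ((φ :: Γ, ψ) :: G) → HLJCom ((Γ, PForm.imp φ ψ) :: G)
  | com {Γ Δ Γ' Δ' : List PForm} {θ θ' : PForm} {G} :
      HLJCom ((Γ ++ Δ, θ) :: G) → HLJCom ((Γ' ++ Δ', θ') :: G) →
      HLJCom ((Γ ++ Δ', θ) :: (Γ' ++ Δ, θ') :: G)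

/-- In HLJ + (com), the hypersequent `⇒ (φ → ψ) ∨ (ψ → φ)` is derivable for
all formulas `φ`, `ψ`. -/
theorem HLJCom_proves_linearity (φ ψ : PForm) :
    HLJCom [([], PForm.or (PForm.imp φ ψ) (PForm.imp ψ φ))] := by
  apply HLJCom.ec
  apply HLJCom.orR₁
  apply HLJCom.impR
  have h := HLJCom.ee (S := ([], PForm.or (PForm.imp φ ψ) (PForm.imp ψ φ))) (T := ([φ], ψ)) [] (H := [])
  apply h
  simp only [List.nil_append]
  apply HLJCom.orR₂
  apply HLJCom.impR
  exact HLJCom.com (Γ := []) (Δ := [φ]) (Γ' := []) (Δ' := [ψ]) (HLJCom.id φ) (HLJCom.id ψ)
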